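/- Let M_k and M_{k+d} be maximum-weight matchings of cardinalities k and k+d in K_{n,n} with real weights. Then there exist d pairwise vertex-disjoint augmenting paths p_1, ..., p_d of M_{k+d} with respect to M_k such that M_k △ p_1 △ ··· △ p_d is a maximum-weight matching of cardinality k+d (i.e., has the same total weight as M_{k+d}). -/

import Mathlib

def IsMatching (n : ℕ) (M : Finset (Fin n × Fin n)) : Prop :=
  ∀ e ∈ M, ∀ f ∈ M, e ≠ f → e.1 ≠ f.1 ∧ e.2 ≠ f.2

noncomputable def wSum (n : ℕ) (w : Fin n → Fin n → ℝ) (S : Finset (Fin n × Fin n)) : ℝ :=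
  ∑ e ∈ S, w e.1 e.2

noncomputable def maxAssign (n : ℕ) (w : Fin n → Fin n → ℝ) (k : ℕ) : ℝ :=
  sSup {x : ℝ | ∃ M : Finset (Fin n × Fin n), IsMatching n M ∧ M.card = k ∧ wSum n w M = x}

def IsAugmentingPath (n : ℕ) (M p : Finset (Fin n × Fin n)) : Prop :=
  ∃ (t : ℕ) (u v : ℕ → Fin n),
    (∀ i ≤ t, ∀ j ≤ t, u i = u j → i = j) ∧
    (∀ i ≤ t, ∀ j ≤ t, v i = v j → i = j) ∧
    (∀ i ≤ t, (u i, v i) ∉ M) ∧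
    (∀ i < t, (u (i + 1), v i) ∈ M) ∧
    (∀ e ∈ M, e.1 ≠ u 0) ∧
    (∀ e ∈ M, e.2 ≠ v t) ∧
    p = ((Finset.range (t + 1)).image fun i => (u i, v i)) ∪
        ((Finset.range t).image fun i => (u (i + 1), v i))
def applyPaths (n : ℕ) (M : Finset (Fin n × Fin n)) (p : ℕ → Finset (Fin n × Fin n)) :
    ℕ → Finset (Fin n × Fin n)
  | 0 => M
  | (i + 1) => symmDiff (applyPaths n M p i) (p i)

lemma uniq_fst {n : ℕ} {M : Finset (Fin n × Fin n)} (h : IsMatching n M)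
    {e f : Fin n × Fin n} (he : e ∈ M) (hf : f ∈ M) (h1 : e.1 = f.1) : e = f := by
  by_contra hne; exact (h e he f hf hne).1 h1

lemma uniq_snd {n : ℕ} {M : Finset (Fin n × Fin n)} (h : IsMatching n M)
    {e f : Fin n × Fin n} (he : e ∈ M) (hf : f ∈ M) (h1 : e.2 = f.2) : e = f := by
  by_contra hne; exact (h e he f hf hne).2 h1

lemma sd_eq_sdiff {α : Type*} [DecidableEq α] {s t : Finset α} (h : t ⊆ s) :
    symmDiff s t = s \ t := by
  ext a
  simp only [Finset.mem_symmDiff, Finset.mem_sdiff]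
  constructor
  · rintro (⟨h1, h2⟩ | ⟨h1, h2⟩); exact ⟨h1, h2⟩; exact absurd (h h1) h2
  · rintro ⟨h1, h2⟩; exact Or.inl ⟨h1, h2⟩

lemma toggle {n : ℕ} (w : Fin n → Fin n → ℝ) {M P Q : Finset (Fin n × Fin n)}
    (hM : IsMatching n M) (hQ : Q ⊆ M) (hP : ∀ e ∈ P, e ∉ M)
    (hPm : IsMatching n P)
    (hPQ : ∀ e ∈ M, e ∉ Q → ∀ f ∈ P, e.1 ≠ f.1 ∧ e.2 ≠ f.2) :
    IsMatching n (symmDiff M (P ∪ Q)) ∧ symmDiff M (P ∪ Q) = (M \ Q) ∪ P ∧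
    (symmDiff M (P ∪ Q)).card + Q.card = M.card + P.card ∧
    wSum n w (symmDiff M (P ∪ Q)) = wSum n w M - wSum n w Q + wSum n w P := by
  have hset : symmDiff M (P ∪ Q) = (M \ Q) ∪ P := by
    ext e
    have h1 : e ∈ P → e ∉ M := hP e
    have h2 : e ∈ Q → e ∈ M := fun h => hQ h
    simp only [Finset.mem_symmDiff, Finset.mem_union, Finset.mem_sdiff]
    tauto
  have hdisj : Disjoint (M \ Q) P := by
    rw [Finset.disjoint_right]
    intro e heP heMQ
    exact hP e heP (Finset.mem_sdiff.mp heMQ).1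
  have hmatch : IsMatching n ((M \ Q) ∪ P) := by
    intro e he f hf hne
    rcases Finset.mem_union.mp he with he' | he' <;>
      rcases Finset.mem_union.mp hf with hf' | hf'
    · exact hM e (Finset.mem_sdiff.mp he').1 f (Finset.mem_sdiff.mp hf').1 hne
    · exact hPQ e (Finset.mem_sdiff.mp he').1 (Finset.mem_sdiff.mp he').2 f hf'
    · have := hPQ f (Finset.mem_sdiff.mp hf').1 (Finset.mem_sdiff.mp hf').2 e he'
      exact ⟨(this.1 ∘ Eq.symm), (this.2 ∘ Eq.symm)⟩
    · exact hPm e he' f hf' hne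
  have hcard : ((M \ Q) ∪ P).card + Q.card = M.card + P.card := by
    rw [Finset.card_union_of_disjoint hdisj]
    have := Finset.card_sdiff_add_card_eq_card hQ
    omega
  have hw : wSum n w ((M \ Q) ∪ P) = wSum n w M - wSum n w Q + wSum n w P := by
    unfold wSum
    rw [Finset.sum_union hdisj, Finset.sum_sdiff_eq_sub hQ]
  rw [hset]
  exact ⟨hmatch, rfl, hcard, hw⟩

noncomputable def pL {n : ℕ} (M : Finset (Fin n × Fin n)) (u : Fin n) : Option (Fin n) :=
  if h : ∃ v, (u, v) ∈ M then some h.choose else none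

noncomputable def pR {n : ℕ} (M : Finset (Fin n × Fin n)) (v : Fin n) : Option (Fin n) :=
  if h : ∃ u, (u, v) ∈ M then some h.choose else none

lemma pL_eq_some {n : ℕ} {M : Finset (Fin n × Fin n)} (hM : IsMatching n M) {u v : Fin n} :
    pL M u = some v ↔ (u, v) ∈ M := by
  unfold pL
  split
  · next h =>
    constructor
    · intro hs
      have := h.choose_spec
      rwa [Option.some_inj.mp hs] at this
    · intro hm
      have := h.choose_spec
      have heq : h.choose = v := congrArg Prod.snd (uniq_fst hM this hm rfl)
      rw [heq]
  · next h =>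
    simp only [reduceCtorEq, false_iff]
    exact fun hm => h ⟨v, hm⟩ |>.elim

lemma pL_eq_none {n : ℕ} {M : Finset (Fin n × Fin n)} {u : Fin n} :
    pL M u = none ↔ ∀ e ∈ M, e.1 ≠ u := by
  unfold pL
  split
  · next h =>
    simp only [reduceCtorEq, false_iff]
    intro hall
    exact hall (u, h.choose) h.choose_spec rfl
  · next h =>
    simp only [true_iff]
    intro e he h1
    exact h ⟨e.2, by rwa [← h1, Prod.mk.eta]⟩

lemma pR_eq_some {n : ℕ} {M : Finset (Fin n × Fin n)} (hM : IsMatching n M) {u v : Fin n} :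
    pR M v = some u ↔ (u, v) ∈ M := by
  unfold pR
  split
  · next h =>
    constructor
    · intro hs
      have := h.choose_spec
      rwa [Option.some_inj.mp hs] at this
    · intro hm
      have := h.choose_spec
      have heq : h.choose = u := congrArg Prod.fst (uniq_snd hM this hm rfl)
      rw [heq]
  · next h =>
    simp only [reduceCtorEq, false_iff]
    exact fun hm => h ⟨u, hm⟩ |>.elim

lemma pR_eq_none {n : ℕ} {M : Finset (Fin n × Fin n)} {v : Fin n} :
    pR M v = none ↔ ∀ e ∈ M, e.2 ≠ v := by
  unfold pR
  split
  · next h =>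
    simp only [reduceCtorEq, false_iff]
    intro hall
    exact hall (h.choose, v) h.choose_spec rfl
  · next h =>
    simp only [true_iff]
    intro e he h1
    exact h ⟨e.1, by rwa [← h1, Prod.mk.eta]⟩

lemma walk {n : ℕ} {Mk Mkd : Finset (Fin n × Fin n)} (hMk : IsMatching n Mk)
    (hMkd : IsMatching n Mkd) (hlt : Mk.card < Mkd.card) :
    (∃ (t : ℕ) (u v : ℕ → Fin n),
      (∀ i ≤ t, ∀ j ≤ t, u i = u j → i = j) ∧
      (∀ i ≤ t, ∀ j ≤ t, v i = v j → i = j) ∧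
      (∀ i ≤ t, (u i, v i) ∈ Mkd ∧ (u i, v i) ∉ Mk) ∧
      (∀ i < t, (u (i+1), v i) ∈ Mk ∧ (u (i+1), v i) ∉ Mkd) ∧
      (∀ e ∈ Mk, e.1 ≠ u 0) ∧
      (∀ e ∈ Mk, e.2 ≠ v t)) ∨
    (∃ (s : ℕ) (u v : ℕ → Fin n), 1 ≤ s ∧
      (∀ i ≤ s, ∀ j ≤ s, u i = u j → i = j) ∧
      (∀ i < s, ∀ j < s, v i = v j → i = j) ∧
      (∀ i < s, (u i, v i) ∈ Mkd ∧ (u i, v i) ∉ Mk) ∧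
      (∀ i < s, (u (i+1), v i) ∈ Mk ∧ (u (i+1), v i) ∉ Mkd) ∧
      (∀ e ∈ Mk, e.1 ≠ u 0) ∧
      (∀ e ∈ Mkd, e.1 ≠ u s)) := by
  -- find an exposed start vertex u0
  have himg : (Mkd.image Prod.fst).card = Mkd.card :=
    Finset.card_image_of_injOn (fun e he f hf h1 => uniq_fst hMkd he hf h1)
  have himg2 : (Mk.image Prod.fst).card ≤ Mk.card := Finset.card_image_le
  have hnsub : ¬ (Mkd.image Prod.fst ⊆ Mk.image Prod.fst) := by
    intro hsub
    have := Finset.card_le_card hsub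
    omega
  obtain ⟨u0, hu0d, hu0k⟩ := Finset.not_subset.mp hnsub
  obtain ⟨e0, he0, he0eq⟩ := Finset.mem_image.mp hu0d
  have hu0Mkd : (u0, e0.2) ∈ Mkd := by rwa [← he0eq, Prod.mk.eta]
  have hu0Mk : ∀ e ∈ Mk, e.1 ≠ u0 := by
    intro e he h1
    exact hu0k (Finset.mem_image.mpr ⟨e, he, h1⟩)
  -- the walk
  set g : Fin n → Option (Fin n) := fun x => (pL Mkd x).bind (pR Mk) with hg
  set seq : ℕ → Option (Fin n) := fun i => (fun o => Option.bind o g)^[i] (some u0) with hseq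
  have hseq0 : seq 0 = some u0 := rfl
  have hseqS : ∀ i, seq (i+1) = (seq i).bind g := by
    intro i
    simp only [hseq, Function.iterate_succ_apply']
  have g_some : ∀ x y, g x = some y → ∃ z, (x, z) ∈ Mkd ∧ (y, z) ∈ Mk := by
    intro x y hxy
    rw [hg] at hxy
    simp only [Option.bind_eq_some_iff] at hxy
    obtain ⟨z, hz1, hz2⟩ := hxy
    exact ⟨z, (pL_eq_some hMkd).mp hz1, (pR_eq_some hMk).mp hz2⟩
  have g_inj : ∀ a b y, g a = some y → g b = some y → a = b := by
    intro a b y ha hb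
    obtain ⟨za, ha1, ha2⟩ := g_some a y ha
    obtain ⟨zb, hb1, hb2⟩ := g_some b y hb
    have hz : za = zb := congrArg Prod.snd (uniq_fst hMk ha2 hb2 rfl)
    subst hz
    exact congrArg Prod.fst (uniq_snd hMkd ha1 hb1 rfl)
  have not_u0 : ∀ j, seq (j+1) ≠ some u0 := by
    intro j hj
    rw [hseqS] at hj
    simp only [Option.bind_eq_some_iff] at hj
    obtain ⟨a, _, ha2⟩ := hj
    obtain ⟨z, _, hz2⟩ := g_some a u0 ha2
    exact hu0Mk _ hz2 rfl
  have seq_inj : ∀ i j x, seq i = some x → seq j = some x → i = j := by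
    intro i
    induction i with
    | zero =>
      intro j x hi hj
      cases j with
      | zero => rfl
      | succ j' =>
        exfalso
        rw [hseq0] at hi
        have hx : u0 = x := Option.some_inj.mp hi
        exact not_u0 j' (hx ▸ hj)
    | succ i' ih =>
      intro j x hi hj
      cases j with
      | zero =>
        exfalso
        rw [hseq0] at hj
        have hx : u0 = x := Option.some_inj.mp hj
        exact not_u0 i' (hx ▸ hi)
      | succ j' =>
        rw [hseqS] at hi hj
        simp only [Option.bind_eq_some_iff] at hi hj
        obtain ⟨a, ha1, ha2⟩ := hi
        obtain ⟨b, hb1, hb2⟩ := hj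
        have hab : a = b := g_inj a b x ha2 hb2
        subst hab
        exact congrArg Nat.succ (ih j' a ha1 hb1)
  have hterm : ∃ m, seq m = none := by
    by_contra hall
    push_neg at hall
    have hsome : ∀ i : ℕ, ∃ x, seq i = some x := by
      intro i
      cases hx : seq i with
      | none => exact absurd hx (hall i)
      | some x => exact ⟨x, rfl⟩
    let f : Fin (n+1) → Fin n := fun i => (seq i.val).getD u0
    have key : ∀ i : Fin (n+1), seq i.val = some (f i) := by
      intro i
      cases hx : seq i.val with
      | none => exact absurd hx (hall _)
      | some x => simp [f, hx]
    have hfinj : Function.Injective f := by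
      intro a b hab
      exact Fin.val_injective (seq_inj _ _ _ (key a) (by rw [hab]; exact key b))
    have := Fintype.card_le_of_injective f hfinj
    simp at this
  set m := Nat.find hterm with hmdef
  have hm : seq m = none := Nat.find_spec hterm
  have hm0 : m ≠ 0 := by
    intro h0
    rw [h0, hseq0] at hm
    cases hm
  set s := m - 1 with hs_def
  have hsm : s + 1 = m := by omega
  have hslt : ∀ i ≤ s, seq i ≠ none := by
    intro i hi
    exact Nat.find_min hterm (by omega)
  set u : ℕ → Fin n := fun i => (seq i).getD u0 with hu_def
  have hu : ∀ i ≤ s, seq i = some (u i) := by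
    intro i hi
    cases hx : seq i with
    | none => exact absurd hx (hslt i hi)
    | some x => simp [hu_def, hx]
  set v : ℕ → Fin n := fun i => (pL Mkd (u i)).getD u0 with hv_def
  have hstep : ∀ i < s, pL Mkd (u i) = some (v i) ∧ pR Mk (v i) = some (u (i+1)) := by
    intro i hi
    have h1 : seq (i+1) = some (u (i+1)) := hu (i+1) (by omega)
    rw [hseqS, hu i (by omega)] at h1
    simp only [Option.bind_some] at h1
    rw [hg] at h1
    simp only [Option.bind_eq_some_iff] at h1
    obtain ⟨z, hz1, hz2⟩ := h1
    have hv : v i = z := by simp [hv_def, hz1]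
    rw [hv]
    exact ⟨hz1, hz2⟩
  have hedge1 : ∀ i < s, (u i, v i) ∈ Mkd := fun i hi => (pL_eq_some hMkd).mp (hstep i hi).1
  have hedge2 : ∀ i < s, (u (i+1), v i) ∈ Mk := fun i hi => (pR_eq_some hMk).mp (hstep i hi).2
  have huinj : ∀ i ≤ s, ∀ j ≤ s, u i = u j → i = j := by
    intro i hi j hj hij
    exact seq_inj i j (u i) (hu i hi) (hij ▸ hu j hj)
  have hnotMk : ∀ i < s, (u i, v i) ∉ Mk := by
    intro i hi hmem
    have h0 : pR Mk (v i) = some (u i) := (pR_eq_some hMk).mpr hmem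
    have h2 := (hstep i hi).2
    have h3 : u i = u (i+1) := Option.some_inj.mp (h0.symm.trans h2)
    have := huinj i (by omega) (i+1) (by omega) h3
    omega
  have hnotMkd : ∀ i < s, (u (i+1), v i) ∉ Mkd := by
    intro i hi hmem
    have heq := uniq_snd hMkd hmem (hedge1 i hi) rfl
    have h3 : u (i+1) = u i := congrArg Prod.fst heq
    have := huinj (i+1) (by omega) i (by omega) h3
    omega
  have hterm2 : (pL Mkd (u s)).bind (pR Mk) = none := by
    have h1 := hseqS s
    rw [hsm, hm, hu s le_rfl] at h1
    simp only [Option.bind_some] at h1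
    rw [hg] at h1
    exact h1.symm
  cases hps : pL Mkd (u s) with
  | some vs =>
    left
    have hpr : pR Mk vs = none := by
      rw [hps] at hterm2
      simpa using hterm2
    have hvs : v s = vs := by simp [hv_def, hps]
    have hvt : ∀ e ∈ Mk, e.2 ≠ v s := by
      rw [hvs]
      exact pR_eq_none.mp hpr
    have hedgeA : ∀ i ≤ s, (u i, v i) ∈ Mkd := by
      intro i hi
      rcases Nat.lt_or_ge i s with h | h
      · exact hedge1 i h
      · have he : i = s := by omega
        subst he
        rw [hvs]
        exact (pL_eq_some hMkd).mp hps
    have hnotMkA : ∀ i ≤ s, (u i, v i) ∉ Mk := by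
      intro i hi hmem
      rcases Nat.lt_or_ge i s with h | h
      · exact hnotMk i h hmem
      · have he : i = s := by omega
        subst he
        exact hvt _ hmem rfl
    have hvinj : ∀ i ≤ s, ∀ j ≤ s, v i = v j → i = j := by
      intro i hi j hj hij
      have := uniq_snd hMkd (hedgeA i hi) (hedgeA j hj) hij
      exact huinj i hi j hj (congrArg Prod.fst this)
    exact ⟨s, u, v, huinj, hvinj, fun i hi => ⟨hedgeA i hi, hnotMkA i hi⟩,
      fun i hi => ⟨hedge2 i hi, hnotMkd i hi⟩, hu0Mk, hvt⟩
  | none =>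
    right
    have hs1 : 1 ≤ s := by
      by_contra h0
      have hse : s = 0 := by omega
      rw [hse] at hps
      have hu00 : u 0 = u0 := by simp [hu_def, hseq0]
      rw [hu00, pL_eq_none] at hps
      exact hps _ hu0Mkd rfl
    have hexp : ∀ e ∈ Mkd, e.1 ≠ u s := pL_eq_none.mp hps
    have hvinj : ∀ i < s, ∀ j < s, v i = v j → i = j := by
      intro i hi j hj hij
      have := uniq_snd hMkd (hedge1 i hi) (hedge1 j hj) hij
      exact huinj i (by omega) j (by omega) (congrArg Prod.fst this)
    exact ⟨s, u, v, hs1, huinj, hvinj, fun i hi => ⟨hedge1 i hi, hnotMk i hi⟩,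
      fun i hi => ⟨hedge2 i hi, hnotMkd i hi⟩, hu0Mk, hexp⟩

lemma applyPaths_congr {n : ℕ} (M : Finset (Fin n × Fin n)) (p q : ℕ → Finset (Fin n × Fin n))
    (m : ℕ) (h : ∀ i < m, p i = q i) : applyPaths n M p m = applyPaths n M q m := by
  induction m with
  | zero => rfl
  | succ m ih =>
    simp only [applyPaths]
    rw [ih (fun i hi => h i (by omega)), h m (by omega)]

lemma applyPaths_sub {n : ℕ} (M : Finset (Fin n × Fin n)) (q : ℕ → Finset (Fin n × Fin n))
    (m : ℕ) : symmDiff (applyPaths n M q m) M ⊆ (Finset.range m).biUnion q := by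
  induction m with
  | zero =>
    simp only [applyPaths, symmDiff_self]
    intro e he
    simp at he
  | succ m ih =>
    intro e he
    rw [Finset.mem_symmDiff] at he
    simp only [applyPaths, Finset.mem_symmDiff] at he
    have key : e ∈ symmDiff (applyPaths n M q m) M ∨ e ∈ q m := by
      rw [Finset.mem_symmDiff]
      tauto
    rcases key with h | h
    · have := ih h
      rw [Finset.mem_biUnion] at this ⊢
      obtain ⟨i, hi, hei⟩ := this
      exact ⟨i, Finset.mem_range.mpr (by have := Finset.mem_range.mp hi; omega), hei⟩
    · exact Finset.mem_biUnion.mpr ⟨m, Finset.mem_range.mpr (by omega), h⟩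

lemma vert {n : ℕ} {Mk Mkd : Finset (Fin n × Fin n)} (hMk : IsMatching n Mk)
    (hMkd : IsMatching n Mkd)
    {t : ℕ} {u v : ℕ → Fin n}
    (hE1 : ∀ i ≤ t, (u i, v i) ∈ Mkd)
    (hE2 : ∀ i < t, (u (i+1), v i) ∈ Mk)
    (hu0 : ∀ e ∈ Mk, e.1 ≠ u 0)
    (hvt : ∀ e ∈ Mk, e.2 ≠ v t)
    {e : Fin n × Fin n} (he : e ∈ symmDiff Mk Mkd)
    {f : Fin n × Fin n}
    (hf : f ∈ ((Finset.range (t+1)).image fun i => (u i, v i)) ∪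
        ((Finset.range t).image fun i => (u (i + 1), v i)))
    (hshare : e.1 = f.1 ∨ e.2 = f.2) :
    e ∈ ((Finset.range (t+1)).image fun i => (u i, v i)) ∪
        ((Finset.range t).image fun i => (u (i + 1), v i)) := by
  rw [Finset.mem_symmDiff] at he
  -- reduce to: e.1 = u i (i ≤ t) or e.2 = v i (i ≤ t)
  have hcase : (∃ i ≤ t, e.1 = u i) ∨ (∃ i ≤ t, e.2 = v i) := by
    rcases Finset.mem_union.mp hf with hf' | hf' <;>
      obtain ⟨i, hi, hfi⟩ := Finset.mem_image.mp hf'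
    · have hit : i ≤ t := by have := Finset.mem_range.mp hi; omega
      rcases hshare with h | h
      · exact Or.inl ⟨i, hit, by rw [h, ← hfi]⟩
      · exact Or.inr ⟨i, hit, by rw [h, ← hfi]⟩
    · have hit : i < t := Finset.mem_range.mp hi
      rcases hshare with h | h
      · exact Or.inl ⟨i + 1, by omega, by rw [h, ← hfi]⟩
      · exact Or.inr ⟨i, by omega, by rw [h, ← hfi]⟩
  have memU : ∀ i ≤ t, e = (u i, v i) →
      e ∈ ((Finset.range (t+1)).image fun i => (u i, v i)) ∪
        ((Finset.range t).image fun i => (u (i + 1), v i)) := by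
    intro i hi hei
    exact Finset.mem_union_left _
      (Finset.mem_image.mpr ⟨i, Finset.mem_range.mpr (by omega), hei.symm⟩)
  have memM : ∀ i < t, e = (u (i+1), v i) →
      e ∈ ((Finset.range (t+1)).image fun i => (u i, v i)) ∪
        ((Finset.range t).image fun i => (u (i + 1), v i)) := by
    intro i hi hei
    exact Finset.mem_union_right _
      (Finset.mem_image.mpr ⟨i, Finset.mem_range.mpr hi, hei.symm⟩)
  rcases hcase with ⟨i, hit, hsh⟩ | ⟨i, hit, hsh⟩
  · rcases he with ⟨heMk, _⟩ | ⟨heMkd, _⟩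
    · -- e ∈ Mk, e.1 = u i : i ≥ 1 and e = (u i, v (i-1))
      rcases Nat.eq_zero_or_pos i with h0 | h0
      · exact absurd hsh (h0 ▸ hu0 e heMk)
      · have hE := hE2 (i-1) (by omega)
        rw [Nat.sub_add_cancel h0] at hE
        have := uniq_fst hMk heMk hE hsh
        exact memM (i-1) (by omega) (by rw [this, Nat.sub_add_cancel h0])
    · exact memU i hit (uniq_fst hMkd heMkd (hE1 i hit) hsh)
  · rcases he with ⟨heMk, _⟩ | ⟨heMkd, _⟩
    · rcases Nat.lt_or_ge i t with h0 | h0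
      · exact memM i h0 (uniq_snd hMk heMk (hE2 i h0) hsh)
      · have : i = t := by omega
        exact absurd hsh (this ▸ hvt e heMk)
    · exact memU i hit (uniq_snd hMkd heMkd (hE1 i hit) hsh)

lemma mainS {n : ℕ} (w : Fin n → Fin n → ℝ) :
    ∀ (μ d k : ℕ) (Mk Mkd : Finset (Fin n × Fin n)),
      IsMatching n Mk → Mk.card = k →
      (∀ N, IsMatching n N → N.card = k → wSum n w N ≤ wSum n w Mk) →
      IsMatching n Mkd → Mkd.card = k + d →
      (symmDiff Mk Mkd).card ≤ μ →
      ∃ p : ℕ → Finset (Fin n × Fin n),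
        (∀ i < d, IsAugmentingPath n Mk (p i) ∧ p i ⊆ symmDiff Mk Mkd) ∧
        (∀ i < d, ∀ j < d, i ≠ j →
          Disjoint ((p i).image Prod.fst) ((p j).image Prod.fst) ∧
          Disjoint ((p i).image Prod.snd) ((p j).image Prod.snd)) ∧
        IsMatching n (applyPaths n Mk p d) ∧
        (applyPaths n Mk p d).card = k + d ∧
        wSum n w Mkd ≤ wSum n w (applyPaths n Mk p d) := by
  intro μ
  induction μ with
  | zero =>
    intro d k Mk Mkd hMk hck hoptk hMkd hckd hμ
    -- symmDiff is empty, so Mk = Mkd, so d = 0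
    have hD : symmDiff Mk Mkd = ∅ := Finset.card_eq_zero.mp (by omega)
    have hMM : Mk = Mkd := by
      have := symmDiff_eq_bot.mp hD
      exact this
    have hd0 : d = 0 := by
      rw [hMM] at hck
      omega
    subst hd0
    refine ⟨fun _ => ∅, by omega, by omega, ?_, ?_, ?_⟩
    · simpa [applyPaths] using hMk
    · simp [applyPaths]; omega
    · simp only [applyPaths]
      rw [hMM]
  | succ m ih =>
    intro d k Mk Mkd hMk hck hoptk hMkd hckd hμ
    cases d with
    | zero =>
      refine ⟨fun _ => ∅, by omega, by omega, ?_, ?_, ?_⟩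
      · simpa [applyPaths] using hMk
      · simpa [applyPaths] using hck
      · simpa [applyPaths] using hoptk Mkd hMkd (by omega)
    | succ e =>
      have hlt : Mk.card < Mkd.card := by omega
      rcases walk hMk hMkd hlt with ⟨t, u, v, huinj, hvinj, hE1, hE2, hu0, hvt⟩ |
        ⟨s, u, v, hs1, huinj, hvinj, hE1, hE2, hu0, hexp⟩
      · -- Case A : augmenting path found
        set pU : Finset (Fin n × Fin n) := (Finset.range (t+1)).image fun i => (u i, v i) with hpU
        set pM : Finset (Fin n × Fin n) := (Finset.range t).image fun i => (u (i + 1), v i) with hpM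
        set p0 : Finset (Fin n × Fin n) := pU ∪ pM with hp0
        have hUmem : ∀ i ≤ t, (u i, v i) ∈ pU := fun i hi =>
          Finset.mem_image.mpr ⟨i, Finset.mem_range.mpr (by omega), rfl⟩
        have hMmem : ∀ i < t, (u (i+1), v i) ∈ pM := fun i hi =>
          Finset.mem_image.mpr ⟨i, Finset.mem_range.mpr hi, rfl⟩
        have hUel : ∀ f ∈ pU, ∃ i, i ≤ t ∧ f = (u i, v i) := by
          intro f hf
          obtain ⟨i, hi, hfi⟩ := Finset.mem_image.mp hf
          exact ⟨i, by have := Finset.mem_range.mp hi; omega, hfi.symm⟩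
        have hMel : ∀ f ∈ pM, ∃ i, i < t ∧ f = (u (i+1), v i) := by
          intro f hf
          obtain ⟨i, hi, hfi⟩ := Finset.mem_image.mp hf
          exact ⟨i, Finset.mem_range.mp hi, hfi.symm⟩
        have hUcard : pU.card = t + 1 := by
          rw [hpU, Finset.card_image_of_injOn, Finset.card_range]
          intro i hi j hj hij
          exact huinj i (by have := Finset.mem_range.mp hi; omega)
            j (by have := Finset.mem_range.mp hj; omega) (congrArg Prod.fst hij)
        have hMcard : pM.card = t := by
          rw [hpM, Finset.card_image_of_injOn, Finset.card_range]
          intro i hi j hj hij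
          have := hvinj i (by have := Finset.mem_range.mp hi; omega)
            j (by have := Finset.mem_range.mp hj; omega) (congrArg Prod.snd hij)
          omega
        have hUMkd : ∀ f ∈ pU, f ∈ Mkd ∧ f ∉ Mk := by
          intro f hf
          obtain ⟨i, hi, hfi⟩ := hUel f hf
          exact hfi ▸ hE1 i hi
        have hMMk : ∀ f ∈ pM, f ∈ Mk ∧ f ∉ Mkd := by
          intro f hf
          obtain ⟨i, hi, hfi⟩ := hMel f hf
          exact hfi ▸ hE2 i hi
        have hp0D : p0 ⊆ symmDiff Mk Mkd := by
          intro f hf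
          rw [Finset.mem_symmDiff]
          rcases Finset.mem_union.mp hf with h | h
          · exact Or.inr ⟨(hUMkd f h).1, (hUMkd f h).2⟩
          · exact Or.inl ⟨(hMMk f h).1, (hMMk f h).2⟩
        have hUmatch : IsMatching n pU := by
          intro a ha b hb hab
          obtain ⟨i, hi, hai⟩ := hUel a ha
          obtain ⟨j, hj, hbj⟩ := hUel b hb
          have hij : i ≠ j := fun h => hab (by rw [hai, hbj, h])
          subst hai; subst hbj
          exact ⟨fun h => hij (huinj i hi j hj h), fun h => hij (hvinj i hi j hj h)⟩
        have hMmatch : IsMatching n pM := by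
          intro a ha b hb hab
          obtain ⟨i, hi, hai⟩ := hMel a ha
          obtain ⟨j, hj, hbj⟩ := hMel b hb
          have hij : i ≠ j := fun h => hab (by rw [hai, hbj, h])
          subst hai; subst hbj
          refine ⟨fun h => hij ?_, fun h => hij ?_⟩
          · have := huinj (i+1) (by omega) (j+1) (by omega) h; omega
          · exact hvinj i (by omega) j (by omega) h
        -- vertex lemma specialized
        have hvert : ∀ a ∈ symmDiff Mk Mkd, ∀ f ∈ p0, (a.1 = f.1 ∨ a.2 = f.2) → a ∈ p0 := by
          intro a ha f hf hsh
          rw [hp0, hpU, hpM] at hf ⊢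
          exact vert hMk hMkd (fun i hi => (hE1 i hi).1) (fun i hi => (hE2 i hi).1)
            hu0 hvt ha hf hsh
        -- toggle Mkd : remove pU, add pM
        have hPQ1 : ∀ a ∈ Mkd, a ∉ pU → ∀ f ∈ pM, a.1 ≠ f.1 ∧ a.2 ≠ f.2 := by
          intro a ha hanU f hfM
          obtain ⟨i, hi, hfi⟩ := hMel f hfM
          subst hfi
          constructor
          · intro h1
            have heq := uniq_fst hMkd ha (hE1 (i+1) (by omega)).1 h1
            apply hanU
            rw [heq]
            exact hUmem (i+1) (by omega)
          · intro h2
            have heq := uniq_snd hMkd ha (hE1 i (by omega)).1 h2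
            apply hanU
            rw [heq]
            exact hUmem i (by omega)
        have T1 := toggle w hMkd (fun f hf => (hUMkd f hf).1) (fun f hf => (hMMk f hf).2)
          hMmatch hPQ1
        obtain ⟨hT1m, -, hT1card, hT1w⟩ := T1
        have hMkd'card : (symmDiff Mkd (pM ∪ pU)).card = k + e := by
          rw [hUcard, hMcard, hckd] at hT1card
          omega
        have hcomm : pM ∪ pU = p0 := by rw [hp0]; exact Finset.union_comm pM pU
        have hDD : symmDiff Mk (symmDiff Mkd (pM ∪ pU)) = symmDiff Mk Mkd \ p0 := by
          rw [← symmDiff_assoc, hcomm, sd_eq_sdiff hp0D]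
        have hp0ne : (u 0, v 0) ∈ p0 := Finset.mem_union_left _ (hUmem 0 (by omega))
        have hmeas : (symmDiff Mk (symmDiff Mkd (pM ∪ pU))).card ≤ m := by
          rw [hDD, Finset.card_sdiff_of_subset hp0D]
          have h1 : 1 ≤ p0.card := Finset.card_pos.mpr ⟨_, hp0ne⟩
          have h2 := Finset.card_le_card hp0D
          omega
        obtain ⟨q, hq1, hq2, hq3, hq4, hq5⟩ :=
          ih e k Mk (symmDiff Mkd (pM ∪ pU)) hMk hck hoptk hT1m hMkd'card hmeas
        have hqD : ∀ i < e, ∀ a ∈ q i, a ∈ symmDiff Mk Mkd ∧ a ∉ p0 := by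
          intro i hi a ha
          have h1 := (hq1 i hi).2 ha
          rw [hDD] at h1
          exact Finset.mem_sdiff.mp h1
        set p : ℕ → Finset (Fin n × Fin n) := fun i => if i < e then q i else p0 with hpdef
        have hpi : ∀ i < e, p i = q i := by
          intro i hi
          simp [hpdef, hi]
        have hpe : p e = p0 := by simp [hpdef]
        have hpq : applyPaths n Mk p e = applyPaths n Mk q e :=
          applyPaths_congr _ _ _ _ (fun i hi => hpi i hi)
        have happ : applyPaths n Mk p (e+1) = symmDiff (applyPaths n Mk q e) p0 := by
          simp only [applyPaths]
          rw [hpq, hpe]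
        have hRsub := applyPaths_sub (n := n) Mk q e
        have hRq : ∀ a, a ∈ symmDiff (applyPaths n Mk q e) Mk →
            a ∈ symmDiff Mk Mkd ∧ a ∉ p0 := by
          intro a ha
          obtain ⟨i, hi, hai⟩ := Finset.mem_biUnion.mp (hRsub ha)
          exact hqD i (Finset.mem_range.mp hi) a hai
        have hQ2 : pM ⊆ applyPaths n Mk q e := by
          intro a ha
          by_contra hnot
          have h1 := hRq a (Finset.mem_symmDiff.mpr (Or.inr ⟨(hMMk a ha).1, hnot⟩))
          exact h1.2 (Finset.mem_union_right _ ha)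
        have hP2 : ∀ a ∈ pU, a ∉ applyPaths n Mk q e := by
          intro a ha hR
          have h1 := hRq a (Finset.mem_symmDiff.mpr (Or.inl ⟨hR, (hUMkd a ha).2⟩))
          exact h1.2 (Finset.mem_union_left _ ha)
        have hPQ2 : ∀ a ∈ applyPaths n Mk q e, a ∉ pM → ∀ f ∈ pU,
            a.1 ≠ f.1 ∧ a.2 ≠ f.2 := by
          intro a haR hanM f hfU
          by_cases haMk : a ∈ Mk
          · obtain ⟨i, hi, hfi⟩ := hUel f hfU
            subst hfi
            constructor
            · intro h1
              rcases Nat.eq_zero_or_pos i with h0 | h0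
              · subst h0
                exact hu0 a haMk h1
              · have hE := (hE2 (i-1) (by omega)).1
                rw [Nat.sub_add_cancel h0] at hE
                have heq := uniq_fst hMk haMk hE h1
                apply hanM
                rw [heq]
                have := hMmem (i-1) (by omega)
                rwa [Nat.sub_add_cancel h0] at this
            · intro h2
              rcases Nat.lt_or_ge i t with h0 | h0
              · have heq := uniq_snd hMk haMk (hE2 i h0).1 h2
                apply hanM
                rw [heq]
                exact hMmem i h0
              · have hit : i = t := by omega
                subst hit
                exact hvt a haMk h2
          · have h1 := hRq a (Finset.mem_symmDiff.mpr (Or.inl ⟨haR, haMk⟩))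
            have hnot : ¬ (a.1 = f.1 ∨ a.2 = f.2) := by
              intro hsh
              exact h1.2 (hvert a h1.1 f (Finset.mem_union_left _ hfU) hsh)
            exact ⟨fun h => hnot (Or.inl h), fun h => hnot (Or.inr h)⟩
        have T2 := toggle w hq3 hQ2 hP2 hUmatch hPQ2
        obtain ⟨hT2m, -, hT2card, hT2w⟩ := T2
        have hp0aug : IsAugmentingPath n Mk p0 :=
          ⟨t, u, v, huinj, hvinj, fun i hi => (hE1 i hi).2, fun i hi => (hE2 i hi).1,
            hu0, hvt, by rw [hp0, hpU, hpM]⟩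
        have hdisjqp : ∀ a, a < e → Disjoint ((q a).image Prod.fst) (p0.image Prod.fst) ∧
            Disjoint ((q a).image Prod.snd) (p0.image Prod.snd) := by
          intro a ha
          constructor
          · rw [Finset.disjoint_left]
            rintro x hx1 hx2
            obtain ⟨b, hb, hbx⟩ := Finset.mem_image.mp hx1
            obtain ⟨c, hc, hcx⟩ := Finset.mem_image.mp hx2
            have hbD := hqD a ha b hb
            exact hbD.2 (hvert b hbD.1 c hc (Or.inl (hbx.trans hcx.symm)))
          · rw [Finset.disjoint_left]
            rintro x hx1 hx2
            obtain ⟨b, hb, hbx⟩ := Finset.mem_image.mp hx1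
            obtain ⟨c, hc, hcx⟩ := Finset.mem_image.mp hx2
            have hbD := hqD a ha b hb
            exact hbD.2 (hvert b hbD.1 c hc (Or.inr (hbx.trans hcx.symm)))
        refine ⟨p, ?_, ?_, ?_, ?_, ?_⟩
        · intro i hi
          by_cases hie : i < e
          · rw [hpi i hie]
            refine ⟨(hq1 i hie).1, fun a ha => (hqD i hie a ha).1⟩
          · have hie' : i = e := by omega
            subst hie'
            rw [hpe]
            exact ⟨hp0aug, hp0D⟩
        · intro i hi j hj hij
          by_cases hie : i < e <;> by_cases hje : j < e
          · rw [hpi i hie, hpi j hje]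
            exact hq2 i hie j hje hij
          · have hje' : j = e := by omega
            subst hje'
            rw [hpi i hie, hpe]
            exact hdisjqp i hie
          · have hie' : i = e := by omega
            subst hie'
            rw [hpi j hje, hpe]
            exact ⟨(hdisjqp j hje).1.symm, (hdisjqp j hje).2.symm⟩
          · omega
        · rw [happ, hp0]
          exact hT2m
        · rw [happ, hp0]
          rw [hUcard, hMcard, hq4] at hT2card
          omega
        · rw [happ, hp0, hT2w]
          rw [hT1w] at hq5
          linarith
      · -- Case B : even path
        set cU : Finset (Fin n × Fin n) := (Finset.range s).image (fun i => (u i, v i)) with hcU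
        set cM : Finset (Fin n × Fin n) := (Finset.range s).image (fun i => (u (i + 1), v i)) with hcM
        have hUmem : ∀ i < s, (u i, v i) ∈ cU := fun i hi =>
          Finset.mem_image.mpr ⟨i, Finset.mem_range.mpr hi, rfl⟩
        have hMmem : ∀ i < s, (u (i+1), v i) ∈ cM := fun i hi =>
          Finset.mem_image.mpr ⟨i, Finset.mem_range.mpr hi, rfl⟩
        have hUel : ∀ f ∈ cU, ∃ i, i < s ∧ f = (u i, v i) := by
          intro f hf
          obtain ⟨i, hi, hfi⟩ := Finset.mem_image.mp hf
          exact ⟨i, Finset.mem_range.mp hi, hfi.symm⟩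
        have hMel : ∀ f ∈ cM, ∃ i, i < s ∧ f = (u (i+1), v i) := by
          intro f hf
          obtain ⟨i, hi, hfi⟩ := Finset.mem_image.mp hf
          exact ⟨i, Finset.mem_range.mp hi, hfi.symm⟩
        have hUcard : cU.card = s := by
          rw [hcU, Finset.card_image_of_injOn, Finset.card_range]
          intro i hi j hj hij
          exact hvinj i (Finset.mem_range.mp hi) j (Finset.mem_range.mp hj)
            (congrArg Prod.snd hij)
        have hMcard : cM.card = s := by
          rw [hcM, Finset.card_image_of_injOn, Finset.card_range]
          intro i hi j hj hij
          exact hvinj i (Finset.mem_range.mp hi) j (Finset.mem_range.mp hj)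
            (congrArg Prod.snd hij)
        have hUMkd : ∀ f ∈ cU, f ∈ Mkd ∧ f ∉ Mk := by
          intro f hf
          obtain ⟨i, hi, hfi⟩ := hUel f hf
          exact hfi ▸ hE1 i hi
        have hMMk : ∀ f ∈ cM, f ∈ Mk ∧ f ∉ Mkd := by
          intro f hf
          obtain ⟨i, hi, hfi⟩ := hMel f hf
          exact hfi ▸ hE2 i hi
        have hUmatch : IsMatching n cU := by
          intro a ha b hb hab
          obtain ⟨i, hi, hai⟩ := hUel a ha
          obtain ⟨j, hj, hbj⟩ := hUel b hb
          have hij : i ≠ j := fun h => hab (by rw [hai, hbj, h])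
          subst hai; subst hbj
          exact ⟨fun h => hij (huinj i (by omega) j (by omega) h),
            fun h => hij (hvinj i hi j hj h)⟩
        have hMmatch : IsMatching n cM := by
          intro a ha b hb hab
          obtain ⟨i, hi, hai⟩ := hMel a ha
          obtain ⟨j, hj, hbj⟩ := hMel b hb
          have hij : i ≠ j := fun h => hab (by rw [hai, hbj, h])
          subst hai; subst hbj
          refine ⟨fun h => hij ?_, fun h => hij (hvinj i hi j hj h)⟩
          have := huinj (i+1) (by omega) (j+1) (by omega) h
          omega
        -- toggle Mk : remove cM, add cU
        have hPQk : ∀ a ∈ Mk, a ∉ cM → ∀ f ∈ cU, a.1 ≠ f.1 ∧ a.2 ≠ f.2 := by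
          intro a ha hanM f hf
          obtain ⟨i, hi, hfi⟩ := hUel f hf
          subst hfi
          constructor
          · intro h1
            rcases Nat.eq_zero_or_pos i with h0 | h0
            · subst h0
              exact hu0 a ha h1
            · have hE := (hE2 (i-1) (by omega)).1
              rw [Nat.sub_add_cancel h0] at hE
              have heq := uniq_fst hMk ha hE h1
              apply hanM
              rw [heq]
              have := hMmem (i-1) (by omega)
              rwa [Nat.sub_add_cancel h0] at this
          · intro h2
            have heq := uniq_snd hMk ha (hE2 i hi).1 h2
            apply hanM
            rw [heq]
            exact hMmem i hi
        have Tk := toggle w hMk (fun f hf => (hMMk f hf).1) (fun f hf => (hUMkd f hf).2)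
          hUmatch hPQk
        obtain ⟨hTkm, -, hTkcard, hTkw⟩ := Tk
        have hMk'card : (symmDiff Mk (cU ∪ cM)).card = k := by
          rw [hUcard, hMcard, hck] at hTkcard
          omega
        have hwle := hoptk _ hTkm hMk'card
        rw [hTkw] at hwle
        -- toggle Mkd : remove cU, add cM
        have hPQd : ∀ a ∈ Mkd, a ∉ cU → ∀ f ∈ cM, a.1 ≠ f.1 ∧ a.2 ≠ f.2 := by
          intro a ha hanU f hf
          obtain ⟨i, hi, hfi⟩ := hMel f hf
          subst hfi
          constructor
          · intro h1
            rcases Nat.lt_or_ge (i+1) s with h0 | h0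
            · have heq := uniq_fst hMkd ha (hE1 (i+1) h0).1 h1
              apply hanU
              rw [heq]
              exact hUmem (i+1) h0
            · have his : i + 1 = s := by omega
              exact hexp a ha (his ▸ h1)
          · intro h2
            have heq := uniq_snd hMkd ha (hE1 i hi).1 h2
            apply hanU
            rw [heq]
            exact hUmem i hi
        have Td := toggle w hMkd (fun f hf => (hUMkd f hf).1) (fun f hf => (hMMk f hf).2)
          hMmatch hPQd
        obtain ⟨hTdm, -, hTdcard, hTdw⟩ := Td
        have hcard'' : (symmDiff Mkd (cM ∪ cU)).card = k + (e+1) := by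
          rw [hUcard, hMcard, hckd] at hTdcard
          omega
        have hw'' : wSum n w Mkd ≤ wSum n w (symmDiff Mkd (cM ∪ cU)) := by
          rw [hTdw]
          linarith
        have hcD : cM ∪ cU ⊆ symmDiff Mk Mkd := by
          intro f hf
          rw [Finset.mem_symmDiff]
          rcases Finset.mem_union.mp hf with h | h
          · exact Or.inl ⟨(hMMk f h).1, (hMMk f h).2⟩
          · exact Or.inr ⟨(hUMkd f h).1, (hUMkd f h).2⟩
        have hDD : symmDiff Mk (symmDiff Mkd (cM ∪ cU)) = symmDiff Mk Mkd \ (cM ∪ cU) := by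
          rw [← symmDiff_assoc, sd_eq_sdiff hcD]
        have hmeas : (symmDiff Mk (symmDiff Mkd (cM ∪ cU))).card ≤ m := by
          rw [hDD, Finset.card_sdiff_of_subset hcD]
          have h1 : 1 ≤ (cM ∪ cU).card :=
            Finset.card_pos.mpr ⟨_, Finset.mem_union_right _ (hUmem 0 (by omega))⟩
          have h2 := Finset.card_le_card hcD
          omega
        obtain ⟨q, hq1, hq2, hq3, hq4, hq5⟩ :=
          ih (e+1) k Mk (symmDiff Mkd (cM ∪ cU)) hMk hck hoptk hTdm hcard'' hmeas
        refine ⟨q, ?_, hq2, hq3, hq4, by linarith⟩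
        intro i hi
        refine ⟨(hq1 i hi).1, ?_⟩
        intro a ha
        have h1 := (hq1 i hi).2 ha
        rw [hDD] at h1
        exact (Finset.mem_sdiff.mp h1).1

/-- given maximum-weight matchings of cardinalities k and k+d, there exist d
pairwise vertex-disjoint augmenting paths of `M_{k+d}` with respect to `M_k` whose successive
symmetric differences with `M_k` produce a maximum-weight (k+d)-matching. -/
theorem stmt12 (n k d : ℕ) (hd : 1 ≤ d) (w : Fin n → Fin n → ℝ)
    (Mk Mkd : Finset (Fin n × Fin n))
    (hMk : IsMatching n Mk) (hck : Mk.card = k)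
    (hoptk : ∀ N, IsMatching n N → N.card = k → wSum n w N ≤ wSum n w Mk)
    (hMkd : IsMatching n Mkd) (hckd : Mkd.card = k + d)
    (hoptkd : ∀ N, IsMatching n N → N.card = k + d → wSum n w N ≤ wSum n w Mkd) :
    ∃ p : ℕ → Finset (Fin n × Fin n),
      (∀ i < d, IsAugmentingPath n Mk (p i) ∧ p i ⊆ Mk ∪ Mkd) ∧
      (∀ i < d, ∀ j < d, i ≠ j →
        Disjoint ((p i).image Prod.fst) ((p j).image Prod.fst) ∧
        Disjoint ((p i).image Prod.snd) ((p j).image Prod.snd)) ∧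
      IsMatching n (applyPaths n Mk p d) ∧
      (applyPaths n Mk p d).card = k + d ∧
      wSum n w (applyPaths n Mk p d) = wSum n w Mkd := by
  obtain ⟨p, h1, h2, h3, h4, h5⟩ :=
    mainS w (symmDiff Mk Mkd).card d k Mk Mkd hMk hck hoptk hMkd hckd le_rfl
  refine ⟨p, ?_, h2, h3, h4, le_antisymm (hoptkd _ h3 h4) h5⟩
  intro i hi
  refine ⟨(h1 i hi).1, ?_⟩
  intro a ha
  have hm := (h1 i hi).2 ha
  rw [Finset.mem_symmDiff] at hm
  rw [Finset.mem_union]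
  tauto
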